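/- Let A be a bounded self-adjoint operator, x an eigenvector of A with eigenvalue λ = ρ(x), and y a nonzero vector linearly independent of x. Let S = span{x,y} and A_S the compression of A to S. Then |λ − ρ(y)| = (λ_max(A_S) − λ_min(A_S))·sin²(∠{x,y}). -/

import Mathlib

open scoped RealInnerProductSpace
open Submodule

noncomputable section

variable {H : Type*} [NormedAddCommGroup H] [InnerProductSpace ℝ H]

/-- The Rayleigh quotient of `x` with respect to `A`. -/
def rq (A : H →L[ℝ] H) (x : H) : ℝ := ⟪x, A x⟫ / ⟪x, x⟫

/-- The residual of `x` with respect to `A`. -/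
def res (A : H →L[ℝ] H) (x : H) : H := A x - rq A x • x

/-- The acute angle between two vectors. -/
def ang (x y : H) : ℝ := Real.arccos (|⟪x, y⟫| / (‖x‖ * ‖y‖))


private lemma key_arith (μ ν lam a b c d : ℝ) (hμν : ν ≤ μ)
    (hN : 0 < a ^ 2 + b ^ 2) (hP : 0 < c ^ 2 + d ^ 2)
    (hea : μ * a = lam * a) (heb : ν * b = lam * b) :
    |lam - (μ * c ^ 2 + ν * d ^ 2) / (c ^ 2 + d ^ 2)| =
      (μ - ν) * (1 - (a * c + b * d) ^ 2 / ((a ^ 2 + b ^ 2) * (c ^ 2 + d ^ 2))) := by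
  rcases eq_or_ne b 0 with hb | hb
  · have ha : a ≠ 0 := by rintro rfl; simp [hb] at hN
    have hlam : μ = lam := mul_right_cancel₀ ha hea
    subst hlam hb
    have hL : μ - (μ * c ^ 2 + ν * d ^ 2) / (c ^ 2 + d ^ 2) =
        (μ - ν) * d ^ 2 / (c ^ 2 + d ^ 2) := by
      field_simp; ring
    rw [hL, abs_of_nonneg (div_nonneg (mul_nonneg (by linarith) (sq_nonneg d)) hP.le)]
    field_simp
    ring
  · have hlam : ν = lam := mul_right_cancel₀ hb heb
    subst hlam
    rcases eq_or_ne a 0 with ha | ha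
    · subst ha
      have hL : ν - (μ * c ^ 2 + ν * d ^ 2) / (c ^ 2 + d ^ 2) =
          -((μ - ν) * c ^ 2 / (c ^ 2 + d ^ 2)) := by
        field_simp; ring
      rw [hL, abs_neg, abs_of_nonneg (div_nonneg (mul_nonneg (by linarith) (sq_nonneg c)) hP.le)]
      field_simp
      ring
    · have hμν2 : μ = ν := mul_right_cancel₀ ha hea
      subst hμν2
      have h9 : (μ * c ^ 2 + μ * d ^ 2) / (c ^ 2 + d ^ 2) = μ := by
        field_simp
      rw [h9]
      simp

/-- If `x` is an eigenvector of `A` with eigenvalue `λ = ρ(x)`, `y` is a nonzero vector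
linearly independent of `x`, `S = span{x,y}`, and `μ ≥ ν` are the two eigenvalues of the
compression `A_S` (with orthonormal eigenvectors `u₁, u₂ ∈ S`), then
`|λ − ρ(y)| = (λ_max(A_S) − λ_min(A_S))·sin²∠{x,y}`. -/
theorem stmt_13 [CompleteSpace H] (A : H →L[ℝ] H) (hA : IsSelfAdjoint A)
    (lam : ℝ) (x : H) (hx : x ≠ 0) (heig : A x = lam • x)
    (y : H) (hy : y ≠ 0) (hli : LinearIndependent ℝ ![x, y])
    (S : Submodule ℝ H) [FiniteDimensional ℝ S]
    (hS : S = Submodule.span ℝ ({x, y} : Set H))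
    (μ ν : ℝ) (hμν : ν ≤ μ) (u₁ u₂ : H) (hu₁S : u₁ ∈ S) (hu₂S : u₂ ∈ S)
    (hu₁ : ‖u₁‖ = 1) (hu₂ : ‖u₂‖ = 1) (horth : ⟪u₁, u₂⟫ = 0)
    (he₁ : (orthogonalProjection S (A u₁) : H) = μ • u₁)
    (he₂ : (orthogonalProjection S (A u₂) : H) = ν • u₂) :
    |lam - rq A y| = (μ - ν) * Real.sin (ang x y) ^ 2 := by
  have hxS : x ∈ S := hS ▸ subset_span (by simp)
  have hyS : y ∈ S := hS ▸ subset_span (by simp)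
  have key : ∀ v ∈ S, ∀ w : H, ⟪v, w⟫ = ⟪v, (orthogonalProjection S w : H)⟫ := by
    intro v hv w
    have h := inner_starProjection_left_eq_right S v w
    rwa [starProjection_eq_self_iff.mpr hv, starProjection_apply] at h
  have h11 : ⟪u₁, u₁⟫ = 1 := by rw [real_inner_self_eq_norm_sq, hu₁]; norm_num
  have h22 : ⟪u₂, u₂⟫ = 1 := by rw [real_inner_self_eq_norm_sq, hu₂]; norm_num
  have horth' : ⟪u₂, u₁⟫ = 0 := by rw [real_inner_comm]; exact horth
  have hA11 : ⟪u₁, A u₁⟫ = μ := by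
    rw [key u₁ hu₁S, he₁, real_inner_smul_right, h11]; ring
  have hA22 : ⟪u₂, A u₂⟫ = ν := by
    rw [key u₂ hu₂S, he₂, real_inner_smul_right, h22]; ring
  have hA12 : ⟪u₁, A u₂⟫ = 0 := by
    rw [key u₁ hu₁S, he₂, real_inner_smul_right, horth]; ring
  have hA21 : ⟪u₂, A u₁⟫ = 0 := by
    rw [key u₂ hu₂S, he₁, real_inner_smul_right, horth']; ring
  -- S = span {u₁, u₂}
  have hon : Orthonormal ℝ ![u₁, u₂] := by
    rw [orthonormal_iff_ite]
    intro i j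
    fin_cases i <;> fin_cases j <;> simp [h11, h22, horth, horth', hu₁, hu₂]
  have hrange2 : Set.range ![x, y] = {x, y} := by ext z; simp [Fin.exists_fin_two, or_comm]
  have hrangeu : Set.range ![u₁, u₂] = {u₁, u₂} := by ext z; simp [Fin.exists_fin_two, or_comm]
  have hfin : Module.finrank ℝ S = 2 := by
    rw [hS, ← hrange2, finrank_span_eq_card hli]; simp
  have hfinU : Module.finrank ℝ (Submodule.span ℝ ({u₁, u₂} : Set H)) = 2 := by
    rw [← hrangeu, finrank_span_eq_card hon.linearIndependent]; simp
  have hle : Submodule.span ℝ ({u₁, u₂} : Set H) ≤ S :=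
    span_le.mpr (by simp [Set.insert_subset_iff, hu₁S, hu₂S])
  have hSU : Submodule.span ℝ ({u₁, u₂} : Set H) = S :=
    Submodule.eq_of_le_of_finrank_eq hle (by rw [hfinU, hfin])
  rw [← hSU] at hxS hyS
  obtain ⟨a, b, hab⟩ := mem_span_pair.mp hxS
  obtain ⟨c, d, hcd⟩ := mem_span_pair.mp hyS
  -- inner products
  have hxy : ⟪x, y⟫ = a * c + b * d := by
    rw [← hab, ← hcd]
    simp only [inner_add_left, inner_add_right, real_inner_smul_left, real_inner_smul_right,
      h11, h22, horth, horth']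
    ring
  have hxx : ⟪x, x⟫ = a ^ 2 + b ^ 2 := by
    rw [← hab]
    simp only [inner_add_left, inner_add_right, real_inner_smul_left, real_inner_smul_right,
      h11, h22, horth, horth']
    ring
  have hyy : ⟪y, y⟫ = c ^ 2 + d ^ 2 := by
    rw [← hcd]
    simp only [inner_add_left, inner_add_right, real_inner_smul_left, real_inner_smul_right,
      h11, h22, horth, horth']
    ring
  have hAcd : A (c • u₁ + d • u₂) = c • A u₁ + d • A u₂ := by
    rw [map_add, map_smul, map_smul]
  have hAab : A (a • u₁ + b • u₂) = a • A u₁ + b • A u₂ := by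
    rw [map_add, map_smul, map_smul]
  have hyAy : ⟪y, A y⟫ = μ * c ^ 2 + ν * d ^ 2 := by
    rw [← hcd, hAcd]
    simp only [inner_add_left, inner_add_right, real_inner_smul_left,
      real_inner_smul_right, hA11, hA22, hA12, hA21]
    ring
  -- eigen relations
  have hea : μ * a = lam * a := by
    have h1 : ⟪u₁, A x⟫ = lam * a := by
      rw [heig, real_inner_smul_right, ← hab]
      simp only [inner_add_right, real_inner_smul_right, h11, horth]
      ring
    have h2 : ⟪u₁, A x⟫ = μ * a := by
      rw [← hab, hAab]
      simp only [inner_add_right, real_inner_smul_right, hA11, hA12]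
      ring
    rw [h1] at h2; linarith
  have heb : ν * b = lam * b := by
    have h1 : ⟪u₂, A x⟫ = lam * b := by
      rw [heig, real_inner_smul_right, ← hab]
      simp only [inner_add_right, real_inner_smul_right, h22, horth']
      ring
    have h2 : ⟪u₂, A x⟫ = ν * b := by
      rw [← hab, hAab]
      simp only [inner_add_right, real_inner_smul_right, hA22, hA21]
      ring
    rw [h1] at h2; linarith
  -- positivity
  have hN : (0:ℝ) < a ^ 2 + b ^ 2 := by
    rw [← hxx, real_inner_self_eq_norm_sq]; exact pow_pos (norm_pos_iff.mpr hx) 2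
  have hP : (0:ℝ) < c ^ 2 + d ^ 2 := by
    rw [← hyy, real_inner_self_eq_norm_sq]; exact pow_pos (norm_pos_iff.mpr hy) 2
  -- rewrite rq
  have hrq : rq A y = (μ * c ^ 2 + ν * d ^ 2) / (c ^ 2 + d ^ 2) := by
    rw [rq, hyAy, hyy]
  -- rewrite sin²
  have hnx : ‖x‖ ^ 2 = a ^ 2 + b ^ 2 := by rw [← real_inner_self_eq_norm_sq, hxx]
  have hny : ‖y‖ ^ 2 = c ^ 2 + d ^ 2 := by rw [← real_inner_self_eq_norm_sq, hyy]
  have hxn0 : ‖x‖ ≠ 0 := norm_ne_zero_iff.mpr hx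
  have hyn0 : ‖y‖ ≠ 0 := norm_ne_zero_iff.mpr hy
  have ht1 : |⟪x, y⟫| / (‖x‖ * ‖y‖) ≤ 1 :=
    div_le_one_of_le₀ (abs_real_inner_le_norm x y) (by positivity)
  have ht0 : (0:ℝ) ≤ |⟪x, y⟫| / (‖x‖ * ‖y‖) := by positivity
  have hsin : Real.sin (ang x y) ^ 2 =
      1 - (a * c + b * d) ^ 2 / ((a ^ 2 + b ^ 2) * (c ^ 2 + d ^ 2)) := by
    rw [ang, Real.sin_arccos, Real.sq_sqrt (by nlinarith [ht0, ht1] : (0:ℝ) ≤ 1 - (|⟪x, y⟫| / (‖x‖ * ‖y‖)) ^ 2)]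
    rw [div_pow, sq_abs, mul_pow, hnx, hny, hxy]
  rw [hrq, hsin]
  exact key_arith μ ν lam a b c d hμν hN hP hea heb
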